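/- Let K be a valued field and α : X → Y a C¹ map between open subsets X ⊆ K^m, Y ⊆ K^n such that rv_λ^{(n×m)}(Jac α) is constant on X, |α(x₂) - α(x₁)| = |Jac α|·|x₂ - x₁| for all x₁, x₂ ∈ X, and rv_λ^{(n)}(α(x₂) - α(x₁)) = rv_λ^{(n)}(Jac α(x₁)·(x₂ - x₁)). If f : Y → K is C¹ and f ∘ α satisfies the λ-supremum-Jacobian inequality |f(α(x)) - f(α(y)) - grad(f∘α)(y)·(x - y)| <₀ λ·|grad(f∘α)(y)|·|x - y| on X, then f satisfies |f(u) - f(v) - grad f(v)·(u - v)| <₀ λ·|grad f(v)|·|u - v| for all u, v ∈ α(X). -/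

import Mathlib

/-- `0` is a bottom element in a linearly ordered commutative group with zero. -/
local instance orderBotOfLinearOrderedCommGroupWithZero
    {Γ : Type*} [LinearOrderedCommGroupWithZero Γ] : OrderBot Γ where
  bot := 0
  bot_le _ := zero_le'

/-- The maximum norm on `K^ι` induced by a valuation. -/
def vsup {K Γ : Type*} [Field K] [LinearOrderedCommGroupWithZero Γ]
    (v : Valuation K Γ) {ι : Type*} [Fintype ι] (x : ι → K) : Γ :=
  Finset.univ.sup fun i => v (x i)

/-- The maximum norm on matrices induced by a valuation. -/
def vsupM {K Γ : Type*} [Field K] [LinearOrderedCommGroupWithZero Γ]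
    (v : Valuation K Γ) {ι κ : Type*} [Fintype ι] [Fintype κ] (M : Matrix ι κ K) : Γ :=
  Finset.univ.sup fun i => vsup v (M i)

/-- `a <₀ b`: `a < b`, or `a = b = 0`. -/
def lt0 {Γ : Type*} [LinearOrderedCommGroupWithZero Γ] (a b : Γ) : Prop :=
  a < b ∨ (a = 0 ∧ b = 0)

open scoped Matrix

lemma le_vsup {K Γ : Type*} [Field K] [LinearOrderedCommGroupWithZero Γ]
    (v : Valuation K Γ) {ι : Type*} [Fintype ι] (x : ι → K) (i : ι) :
    v (x i) ≤ vsup v x := by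
  unfold vsup; exact Finset.le_sup (f := fun i => v (x i)) (Finset.mem_univ i)

lemma vsup_le_vsupM {K Γ : Type*} [Field K] [LinearOrderedCommGroupWithZero Γ]
    (v : Valuation K Γ) {ι κ : Type*} [Fintype ι] [Fintype κ] (M : Matrix ι κ K) (i : ι) :
    vsup v (M i) ≤ vsupM v M := by
  unfold vsupM; exact Finset.le_sup (f := fun i => vsup v (M i)) (Finset.mem_univ i)

/-- The valuation of a dot product is at most the product of sup norms. -/
lemma vdot_le {K Γ : Type*} [Field K] [LinearOrderedCommGroupWithZero Γ]
    (v : Valuation K Γ) {ι : Type*} [Fintype ι] (g w : ι → K) :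
    v (g ⬝ᵥ w) ≤ vsup v g * vsup v w := by
  refine Valuation.map_sum_le v fun i _ => ?_
  rw [v.map_mul]
  exact mul_le_mul' (le_vsup v g i) (le_vsup v w i)

/-- `lt0 0 b` always holds. -/
lemma lt0_zero_left {Γ : Type*} [LinearOrderedCommGroupWithZero Γ] (b : Γ) : lt0 0 b := by
  rcases (zero_le' (a := b)).lt_or_eq with h | h
  · exact Or.inl h
  · exact Or.inr ⟨rfl, h.symm⟩

lemma vsup_vecMul_le {K Γ : Type*} [Field K] [LinearOrderedCommGroupWithZero Γ]
    (v : Valuation K Γ) {ι κ : Type*} [Fintype ι] [Fintype κ]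
    (g : ι → K) (M : Matrix ι κ K) :
    vsup v (Matrix.vecMul g M) ≤ vsup v g * vsupM v M := by
  unfold vsup
  refine Finset.sup_le fun j _ => ?_
  refine Valuation.map_sum_le v fun i _ => ?_
  rw [v.map_mul]
  refine mul_le_mul' (le_vsup v g i) ?_
  exact le_trans (le_vsup v (M i) j) (vsup_le_vsupM v M i)

/-- Preservation of the λ-supremum-Jacobian inequality under a norm-preserving
reparametrization `α` (with `rv_λ`-constant Jacobian, exact norm scaling, and `rv_λ`-exact
first-order behaviour): if `f ∘ α` satisfies the λ-sup-Jacobian inequality on `X` (with its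
gradient given by the chain rule `grad (f∘α) y = grad f (α y) · Jac α y`), then `f`
satisfies the λ-sup-Jacobian inequality on `α(X)`. -/
theorem supJac_transfer {K Γ : Type*} [Field K] [LinearOrderedCommGroupWithZero Γ]
    (v : Valuation K Γ) {m n : ℕ} (lam : Γ) (hlam0 : 0 < lam) (hlam1 : lam ≤ 1)
    (X : Set (Fin m → K)) (α : (Fin m → K) → Fin n → K)
    (Jacα : (Fin m → K) → Matrix (Fin n) (Fin m) K)
    (f : (Fin n → K) → K) (gradf : (Fin n → K) → Fin n → K)
    (hJacConst : ∀ x₁ ∈ X, ∀ x₂ ∈ X, Jacα x₁ = Jacα x₂ ∨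
      vsupM v (Jacα x₁ - Jacα x₂) < lam * vsupM v (Jacα x₁))
    (hα1 : ∀ x₁ ∈ X, ∀ x₂ ∈ X,
      vsup v (α x₂ - α x₁) = vsupM v (Jacα x₁) * vsup v (x₂ - x₁))
    (hα2 : ∀ x₁ ∈ X, ∀ x₂ ∈ X,
      α x₂ - α x₁ = (Jacα x₁).mulVec (x₂ - x₁) ∨
        vsup v ((α x₂ - α x₁) - (Jacα x₁).mulVec (x₂ - x₁)) <
          lam * vsup v (α x₂ - α x₁))
    (hcomp : ∀ x ∈ X, ∀ y ∈ X,
      lt0 (v (f (α x) - f (α y) -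
          ∑ j, Matrix.vecMul (gradf (α y)) (Jacα y) j * (x j - y j)))
        (lam * vsup v (Matrix.vecMul (gradf (α y)) (Jacα y)) * vsup v (x - y))) :
    ∀ x ∈ X, ∀ y ∈ X,
      lt0 (v (f (α x) - f (α y) - ∑ i, gradf (α y) i * (α x i - α y i)))
        (lam * vsup v (gradf (α y)) * vsup v (α x - α y)) := by
  intro x hx y hy
  have hnorm := hα1 y hy x hx
  have ha2 := hα2 y hy x hx
  have hc := hcomp x hx y hy
  rw [show (∑ i, gradf (α y) i * (α x i - α y i)) = gradf (α y) ⬝ᵥ (α x - α y) from by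
    simp [dotProduct]]
  rw [show (∑ j, Matrix.vecMul (gradf (α y)) (Jacα y) j * (x j - y j)) =
      Matrix.vecMul (gradf (α y)) (Jacα y) ⬝ᵥ (x - y) from by
    simp [dotProduct]] at hc
  set g : Fin n → K := gradf (α y) with hgdef
  set J : Matrix (Fin n) (Fin m) K := Jacα y with hJdef
  set D : Fin n → K := α x - α y with hDdef
  set d : Fin m → K := x - y with hddef
  set F : K := f (α x) - f (α y) with hFdef
  clear_value g J D d F
  clear hgdef hJdef hDdef hddef hFdef hα1 hα2 hcomp hJacConst hx hy
  -- rewrite the composed dot product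
  rw [← Matrix.dotProduct_mulVec] at hc
  -- decompose the error term
  have hdecomp : F - g ⬝ᵥ D = (F - g ⬝ᵥ (J.mulVec d)) - g ⬝ᵥ (D - J.mulVec d) := by
    rw [dotProduct_sub]; ring
  by_cases hE0 : F - g ⬝ᵥ D = 0
  · rw [hE0, v.map_zero]; exact lt0_zero_left _
  have hA : v (F - g ⬝ᵥ (J.mulVec d)) < lam * vsup v g * vsup v D ∨
      F - g ⬝ᵥ (J.mulVec d) = 0 := by
    rcases hc with h | ⟨h1, _⟩
    · left
      refine lt_of_lt_of_le h ?_
      rw [hnorm, ← mul_assoc]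
      refine mul_le_mul_left ?_ _
      rw [mul_assoc]
      exact mul_le_mul_right (vsup_vecMul_le v g J) lam
    · right
      exact (Valuation.zero_iff v).mp h1
  have hBB : v (g ⬝ᵥ (D - J.mulVec d)) < lam * vsup v g * vsup v D ∨
      g ⬝ᵥ (D - J.mulVec d) = 0 := by
    rcases ha2 with h | h
    · right
      rw [show D - J.mulVec d = 0 by rw [h]; simp, dotProduct_zero]
    · by_cases hgz : vsup v g = 0
      · right
        have hle := vdot_le v g (D - J.mulVec d)
        rw [hgz, zero_mul] at hle
        exact (Valuation.zero_iff v).mp (le_antisymm hle zero_le')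
      · left
        refine lt_of_le_of_lt (vdot_le v g (D - J.mulVec d)) ?_
        calc vsup v g * vsup v (D - J.mulVec d) < vsup v g * (lam * vsup v D) :=
              mul_lt_mul_of_le_of_lt_of_nonneg_of_pos le_rfl h zero_le' (zero_lt_iff.mpr hgz)
          _ = lam * vsup v g * vsup v D := by rw [mul_left_comm, ← mul_assoc]
  left
  have hEle : v (F - g ⬝ᵥ D) ≤ max (v (F - g ⬝ᵥ (J.mulVec d)))
      (v (g ⬝ᵥ (D - J.mulVec d))) := by
    rw [hdecomp]; exact v.map_sub _ _
  rcases hA with hA | hA <;> rcases hBB with hBb | hBb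
  · exact lt_of_le_of_lt hEle (max_lt hA hBb)
  · refine lt_of_le_of_lt hEle (max_lt hA ?_)
    rw [hBb, v.map_zero]
    exact lt_of_le_of_lt zero_le' hA
  · refine lt_of_le_of_lt hEle (max_lt ?_ hBb)
    rw [hA, v.map_zero]
    exact lt_of_le_of_lt zero_le' hBb
  · exfalso; apply hE0; rw [hdecomp, hA, hBb, sub_zero]
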